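/- Let Γ be either the free group on s₁, s₂ or ℤ≀ℤ, F_l = {s₁^{-1}, e, s₁}, I ⊆ ℕ, Λ_I = ⟨s₂^n s₁ s₂^{-n} : n ∈ I⟩, and V_{F_l,I} the ℤ/2[Γ]-submodule of (ℤ/2)^{⊕Γ} generated by {1_{F_l} - 1_{t F_l} : t ∈ Λ_I}. Then for g ∈ Γ, the element w_g = Σ_{h ∈ F_l}(δ_h - δ_{gh}) lies in V_{F_l,I} if and only if g ∈ Λ_I. -/

import Mathlib

open scoped commutatorElement

/-- The relations of `ℤ ≀ ℤ = ⟨s₁, s₂ | [s₂^k s₁ s₂^{-k}, s₁] = 1, k ∈ ℤ⟩`, with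
`s₁ = FreeGroup.of false` and `s₂ = FreeGroup.of true`. -/
def wreathRels : Set (FreeGroup Bool) :=
  {r | ∃ k : ℤ,
    r = ⁅(FreeGroup.of true) ^ k * FreeGroup.of false * (FreeGroup.of true) ^ (-k),
        FreeGroup.of false⁆}

/-- `Γ` is free on the two generators `s₁, s₂`. -/
def IsFreeOn {Γ : Type*} [Group Γ] (s₁ s₂ : Γ) : Prop :=
  ∃ e : FreeGroup Bool ≃* Γ, e (FreeGroup.of false) = s₁ ∧ e (FreeGroup.of true) = s₂

/-- `Γ` is `ℤ ≀ ℤ` with distinguished generators `s₁, s₂`. -/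
def IsZwrZ {Γ : Type*} [Group Γ] (s₁ s₂ : Γ) : Prop :=
  ∃ e : PresentedGroup wreathRels ≃* Γ,
    e (PresentedGroup.of false) = s₁ ∧ e (PresentedGroup.of true) = s₂

open MonoidAlgebra Multiplicative in
/-- In both cases there is a "degree in `s₁`" homomorphism `Γ → ℤ`. -/
lemma stmt16_exists_deg {Γ : Type*} [Group Γ] (s₁ s₂ : Γ)
    (hΓ : IsFreeOn s₁ s₂ ∨ IsZwrZ s₁ s₂) :
    ∃ ψ : Γ →* Multiplicative ℤ, ψ s₁ = ofAdd 1 := by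
  obtain ⟨e, he1, he2⟩ | ⟨e, he1, he2⟩ := hΓ
  · refine ⟨(FreeGroup.lift fun b => ofAdd (if b then (0:ℤ) else 1)).comp e.symm.toMonoidHom, ?_⟩
    have h : e.symm s₁ = FreeGroup.of false := by rw [← he1, e.symm_apply_apply]
    simp [h]
  · have hrel : ∀ r ∈ wreathRels,
        (FreeGroup.lift fun b => ofAdd (if b then (0:ℤ) else 1)) r = 1 := by
      rintro r ⟨k, rfl⟩
      rw [map_commutatorElement]
      exact commutatorElement_eq_one_iff_commute.mpr (mul_comm _ _)
    refine ⟨(PresentedGroup.toGroup hrel).comp e.symm.toMonoidHom, ?_⟩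
    have h : e.symm s₁ = PresentedGroup.of false := by rw [← he1, e.symm_apply_apply]
    simp [h, PresentedGroup.toGroup.of]

open MonoidAlgebra Multiplicative in
/-- Right multiplication by `δ_{s₁⁻¹} + δ_1 + δ_{s₁}` is injective. -/
lemma stmt16_mul_a_inj {Γ : Type*} [Group Γ] [DecidableEq Γ] (s₁ : Γ)
    (ψ : Γ →* Multiplicative ℤ) (hψ : ψ s₁ = ofAdd 1)
    (x : MonoidAlgebra (ZMod 2) Γ)
    (hx : x * (single s₁⁻¹ 1 + single 1 1 + single s₁ 1) = 0) : x = 0 := by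
  by_contra h
  obtain ⟨g₀, hg₀, hmax⟩ := Finset.exists_max_image x.coeff.support (fun g => toAdd (ψ g))
    (Finsupp.support_nonempty_iff.mpr (by rwa [← MonoidAlgebra.coeff_inj, MonoidAlgebra.coeff_zero] at h))
  have hψ1 : toAdd (ψ s₁) = 1 := by rw [hψ]; rfl
  have hnot : ∀ k : Γ, toAdd (ψ g₀) < toAdd (ψ k) → x.coeff k = 0 := by
    intro k hk
    by_contra hxk
    exact absurd (hmax k (Finsupp.mem_support_iff.mpr hxk)) (not_le.mpr hk)
  have e1 : x.coeff (g₀ * s₁ * s₁) = 0 := hnot _ (by simp [toAdd_mul, hψ1]; try omega)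
  have e2 : x.coeff (g₀ * s₁) = 0 := hnot _ (by simp [toAdd_mul, hψ1]; try omega)
  have key : (x * (single s₁⁻¹ 1 + single 1 1 + single s₁ 1) : MonoidAlgebra (ZMod 2) Γ).coeff
      (g₀ * s₁) = 0 := by
    rw [hx]; simp
  rw [mul_add, mul_add, MonoidAlgebra.coeff_add, MonoidAlgebra.coeff_add, Finsupp.add_apply, Finsupp.add_apply,
    MonoidAlgebra.mul_single_apply, MonoidAlgebra.mul_single_apply,
    MonoidAlgebra.mul_single_apply, inv_inv, inv_one, mul_one, mul_inv_cancel_right,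
    mul_assoc] at key
  rw [← mul_assoc] at key
  rw [e1] at key
  rw [mul_one, mul_one, e2] at key
  simp only [mul_one, zero_add, add_zero] at key
  exact absurd key (Finsupp.mem_support_iff.mp hg₀)

open MonoidAlgebra Multiplicative in
/-- If `δ_1 - δ_g` lies in the left ideal generated by the `δ_1 - δ_τ`, `τ ∈ Λ`,
then `g ∈ Λ`. -/
lemma stmt16_mem_of_diff_mem_span {Γ : Type*} [Group Γ] [DecidableEq Γ] (Λ : Subgroup Γ) (g : Γ)
    (hg : (single 1 1 - single g 1 : MonoidAlgebra (ZMod 2) Γ) ∈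
      Submodule.span (MonoidAlgebra (ZMod 2) Γ)
        {y | ∃ τ ∈ Λ, y = single 1 1 - single τ 1}) :
    g ∈ Λ := by
  classical
  set π : (Γ →₀ ZMod 2) →+ ((Γ ⧸ Λ) →₀ ZMod 2) :=
    Finsupp.mapDomain.addMonoidHom (QuotientGroup.mk (s := Λ)) with hπdef
  have hπ : ∀ y : MonoidAlgebra (ZMod 2) Γ,
      π y.coeff = Finsupp.mapDomain (QuotientGroup.mk (s := Λ)) y.coeff := fun _ => rfl
  have hsingle_mul : ∀ (a : Γ) (x : MonoidAlgebra (ZMod 2) Γ),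
      (single a 1 * x).coeff = Finsupp.mapDomain (fun z => a * z) x.coeff := by
    intro a x
    ext y
    rw [MonoidAlgebra.single_mul_apply, one_mul]
    have hinj : Function.Injective (fun z : Γ => a * z) := mul_right_injective a
    have := Finsupp.mapDomain_apply hinj x.coeff (a⁻¹ * y)
    simpa [mul_inv_cancel_left] using this.symm
  have hker_mul : ∀ (r x : MonoidAlgebra (ZMod 2) Γ), π x.coeff = 0 → π (r * x).coeff = 0 := by
    intro r x hx
    induction r using MonoidAlgebra.induction_on with
    | of a =>
      rw [show MonoidAlgebra.of (ZMod 2) Γ a = single a 1 from rfl, hπ, hsingle_mul,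
        ← Finsupp.mapDomain_comp]
      have hcomp : (QuotientGroup.mk (s := Λ)) ∘ (fun z : Γ => a * z)
          = (fun q : Γ ⧸ Λ => a • q) ∘ (QuotientGroup.mk (s := Λ)) := rfl
      rw [hcomp, Finsupp.mapDomain_comp, ← hπ, hx, Finsupp.mapDomain_zero]
    | add f f' hf hf' => rw [add_mul, MonoidAlgebra.coeff_add, map_add, hf, hf', add_zero]
    | smul b f hf =>
      rw [smul_mul_assoc]
      have hsm : π (b • (f * x)).coeff = b • π (f * x).coeff := by
        rw [MonoidAlgebra.coeff_smul, hπ]; exact Finsupp.mapDomain_smul _ _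
      rw [hsm, hf, smul_zero]
  have key : π (single 1 1 - single g 1 : MonoidAlgebra (ZMod 2) Γ).coeff = 0 := by
    refine Submodule.span_induction
      (p := fun (x : MonoidAlgebra (ZMod 2) Γ) _ => π x.coeff = 0) ?_ (map_zero π) ?_ ?_ hg
    · rintro y ⟨τ, hτ, rfl⟩
      have hq : (QuotientGroup.mk τ : Γ ⧸ Λ) = QuotientGroup.mk 1 := by
        rw [QuotientGroup.eq]; simpa using Λ.inv_mem hτ
      rw [MonoidAlgebra.coeff_sub, map_sub, hπ, hπ]
      show Finsupp.mapDomain _ (Finsupp.single 1 1) - Finsupp.mapDomain _ (Finsupp.single τ 1) = 0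
      rw [Finsupp.mapDomain_single, Finsupp.mapDomain_single, hq, sub_self]
    · intro x y _ _ hx hy; rw [MonoidAlgebra.coeff_add, map_add, hx, hy, add_zero]
    · intro r x _ hx; exact hker_mul r x hx
  rw [MonoidAlgebra.coeff_sub, map_sub, hπ, hπ] at key
  have key2 : Finsupp.mapDomain (QuotientGroup.mk (s := Λ)) (Finsupp.single (1:Γ) (1:ZMod 2))
      - Finsupp.mapDomain (QuotientGroup.mk (s := Λ)) (Finsupp.single g (1:ZMod 2)) = 0 := key
  rw [Finsupp.mapDomain_single, Finsupp.mapDomain_single, sub_eq_zero] at key2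
  have h3 : (QuotientGroup.mk (1:Γ) : Γ ⧸ Λ) = QuotientGroup.mk g := by
    by_contra hne
    have := congrFun (congrArg (DFunLike.coe) key2) (QuotientGroup.mk (1:Γ))
    rw [Finsupp.single_apply, Finsupp.single_apply] at this
    simp only [if_pos rfl, if_neg (Ne.symm hne)] at this
    exact one_ne_zero this
  have := (QuotientGroup.eq (s := Λ)).mp h3
  simpa using this

open MonoidAlgebra Multiplicative

/-- in `Γ` (free on `s₁,s₂` or `ℤ≀ℤ`), with `F_l = {s₁⁻¹, e, s₁}`,
`Λ_I = ⟨s₂^n s₁ s₂^{-n} : n ∈ I⟩` and `V_{F_l,I}` the `ℤ/2[Γ]`-submodule of `ℤ/2[Γ]`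
generated by the `w_τ = Σ_{h∈F_l}(δ_h − δ_{τh})`, `τ ∈ Λ_I`, one has
`w_g ∈ V_{F_l,I} ↔ g ∈ Λ_I`. -/
theorem stmt_16 {Γ : Type*} [Group Γ] [DecidableEq Γ] (s₁ s₂ : Γ)
    (hΓ : IsFreeOn s₁ s₂ ∨ IsZwrZ s₁ s₂)
    (I : Set ℕ)
    (t : ℕ → Γ) (ht : ∀ k, t k = s₂ ^ k * s₁ * s₂ ^ (-(k : ℤ)))
    (Λ : Subgroup Γ) (hΛ : Λ = Subgroup.closure {x | ∃ k ∈ I, x = t k})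
    (Fl : Finset Γ) (hFl : Fl = {s₁⁻¹, 1, s₁})
    (w : Γ → MonoidAlgebra (ZMod 2) Γ)
    (hw : ∀ g : Γ, w g = ∑ h ∈ Fl,
      (MonoidAlgebra.single h 1 - MonoidAlgebra.single (g * h) 1))
    (V : Submodule (MonoidAlgebra (ZMod 2) Γ) (MonoidAlgebra (ZMod 2) Γ))
    (hV : V = Submodule.span (MonoidAlgebra (ZMod 2) Γ) {x | ∃ τ ∈ Λ, x = w τ})
    (g : Γ) :
    w g ∈ V ↔ g ∈ Λ := by
  classical
  obtain ⟨ψ, hψ⟩ := stmt16_exists_deg s₁ s₂ hΓ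
  have hψ1 : toAdd (ψ s₁) = 1 := by rw [hψ]; rfl
  -- the three elements of `Fl` are distinct
  have d1 : s₁⁻¹ ≠ 1 := by
    intro h
    have := congrArg (fun z => toAdd (ψ z)) h
    simp [hψ1] at this
  have d2 : (1:Γ) ≠ s₁ := by
    intro h
    have := congrArg (fun z => toAdd (ψ z)) h
    simp [hψ1] at this
  have d3 : s₁⁻¹ ≠ s₁ := by
    intro h
    have := congrArg (fun z => toAdd (ψ z)) h
    simp [hψ1] at this
  set a : MonoidAlgebra (ZMod 2) Γ := single s₁⁻¹ 1 + single 1 1 + single s₁ 1 with ha_def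
  have ha : (∑ h ∈ Fl, single h (1:ZMod 2)) = a := by
    rw [hFl]
    rw [show ({s₁⁻¹, 1, s₁} : Finset Γ) = insert s₁⁻¹ (insert 1 {s₁}) from rfl]
    rw [Finset.sum_insert (by simp [d1, d3]), Finset.sum_insert (by simp [d2]),
      Finset.sum_singleton, ha_def, add_assoc]
  have hga : ∀ g : Γ, (∑ h ∈ Fl, single (g * h) (1:ZMod 2))
      = single g 1 * ∑ h ∈ Fl, single h (1:ZMod 2) := by
    intro g
    rw [Finset.mul_sum]
    exact Finset.sum_congr rfl fun h _ => by
      rw [MonoidAlgebra.single_mul_single, one_mul]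
  have hwa : ∀ g : Γ, w g = a - single g 1 * a := by
    intro g
    rw [hw, Finset.sum_sub_distrib, hga, ha]
  -- the forward direction: `Λ ⊆ {g | w g ∈ V}`, since the latter is a subgroup
  have fwd : ∀ x ∈ Λ, w x ∈ V := by
    intro x hx
    rw [hΛ] at hx
    induction hx using Subgroup.closure_induction with
    | mem y hy =>
      rw [hV]
      exact Submodule.subset_span ⟨y, by rw [hΛ]; exact Subgroup.subset_closure hy, rfl⟩
    | one =>
      rw [hwa, ← MonoidAlgebra.one_def, one_mul, sub_self]
      exact V.zero_mem
    | mul x y _ _ hxV hyV =>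
      have hxy : w (x * y) = w x + (single x 1 : MonoidAlgebra (ZMod 2) Γ) • w y := by
        rw [hwa, hwa, hwa, smul_eq_mul, mul_sub]
        rw [show single (x*y) (1:ZMod 2) = single x 1 * single y 1 by
          rw [MonoidAlgebra.single_mul_single, one_mul], mul_assoc]
        abel
      rw [hxy]
      exact V.add_mem hxV (V.smul_mem _ hyV)
    | inv x _ hxV =>
      have hxi : w x⁻¹ = (single x⁻¹ 1 : MonoidAlgebra (ZMod 2) Γ) • (-(w x)) := by
        rw [hwa, hwa, smul_eq_mul, neg_sub, mul_sub, ← mul_assoc]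
        rw [show single x⁻¹ (1:ZMod 2) * single x 1 = 1 by
          rw [MonoidAlgebra.single_mul_single, one_mul, inv_mul_cancel,
            ← MonoidAlgebra.one_def], one_mul]
      rw [hxi]
      exact V.smul_mem _ (V.neg_mem hxV)
  refine ⟨fun hgV => ?_, fun hg => fwd g hg⟩
  -- the backward direction
  rw [hV] at hgV
  set f : MonoidAlgebra (ZMod 2) Γ →ₗ[MonoidAlgebra (ZMod 2) Γ] MonoidAlgebra (ZMod 2) Γ :=
    LinearMap.toSpanSingleton (MonoidAlgebra (ZMod 2) Γ) (MonoidAlgebra (ZMod 2) Γ) a with hf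
  have hfy : ∀ y : MonoidAlgebra (ZMod 2) Γ, f y = y * a := fun _ => rfl
  have hda : ∀ τ : Γ, (single 1 1 - single τ 1 : MonoidAlgebra (ZMod 2) Γ) * a = w τ := by
    intro τ
    rw [sub_mul, ← MonoidAlgebra.one_def, one_mul, hwa]
  have himg : {x | ∃ τ ∈ Λ, x = w τ}
      = f '' {y | ∃ τ ∈ Λ, y = single 1 1 - single τ 1} := by
    ext z
    constructor
    · rintro ⟨τ, hτ, rfl⟩
      exact ⟨single 1 1 - single τ 1, ⟨τ, hτ, rfl⟩, by rw [hfy, hda]⟩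
    · rintro ⟨y, ⟨τ, hτ, rfl⟩, rfl⟩
      exact ⟨τ, hτ, by rw [hfy, hda]⟩
  rw [himg, Submodule.span_image] at hgV
  obtain ⟨y, hy, hfy'⟩ := Submodule.mem_map.mp hgV
  have h0 : (y - (single 1 1 - single g 1)) *
      (single s₁⁻¹ 1 + single 1 1 + single s₁ 1) = 0 := by
    rw [← ha_def, sub_mul, hda, ← hfy y, hfy', sub_self]
  have hy' : y = single 1 1 - single g 1 :=
    sub_eq_zero.mp (stmt16_mul_a_inj s₁ ψ hψ _ h0)
  exact stmt16_mem_of_diff_mem_span Λ g (hy' ▸ hy)
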